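/- Almost surely, for every forecast value f ∈ F, the averaged prediction errors vanish: (1/T) Σ_{t=1}^T 1{f_t = f} (δ_{X_t} − p_t) → 0 in ℝ^Ω as T → ∞. -/

import Mathlib

open Filter MeasureTheory
open scoped NNReal ENNReal

noncomputable section

/-- Kronecker's lemma (for the weights `t+1`): if `∑_{t<n} u t / (t+1)` converges, then
`(1/n) ∑_{t<n} u t → 0`. -/
lemma kronecker_aux {u : ℕ → ℝ} {L : ℝ}
    (h : Tendsto (fun n => ∑ t ∈ Finset.range n, ((t : ℝ) + 1)⁻¹ * u t) atTop (nhds L)) :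
    Tendsto (fun n : ℕ => (n : ℝ)⁻¹ * ∑ t ∈ Finset.range n, u t) atTop (nhds 0) := by
  set b : ℕ → ℝ := fun n => ∑ t ∈ Finset.range n, ((t : ℝ) + 1)⁻¹ * u t with hbdef
  have key : ∀ n, ∑ t ∈ Finset.range n, u t = n * b n - ∑ t ∈ Finset.range n, b t := by
    intro n
    induction n with
    | zero => simp
    | succ n ih =>
      have hb1 : b (n + 1) = b n + ((n : ℝ) + 1)⁻¹ * u n := by
        simp [hbdef, Finset.sum_range_succ]
      have hu : u n = ((n : ℝ) + 1) * (b (n + 1) - b n) := by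
        rw [hb1]
        have : ((n : ℝ) + 1) ≠ 0 := by positivity
        field_simp
        ring
      rw [Finset.sum_range_succ, ih, Finset.sum_range_succ (f := b), hu]
      push_cast
      ring
  have hc : Tendsto (fun n : ℕ => (n : ℝ)⁻¹ * ∑ t ∈ Finset.range n, b t) atTop (nhds L) := by
    simpa [smul_eq_mul] using h.cesaro
  have heq : ∀ n : ℕ, 1 ≤ n →
      (n : ℝ)⁻¹ * ∑ t ∈ Finset.range n, u t
        = b n - (n : ℝ)⁻¹ * ∑ t ∈ Finset.range n, b t := by
    intro n hn
    have hn' : (n : ℝ) ≠ 0 := by positivity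
    rw [key n]
    field_simp
  have := h.sub hc
  rw [sub_self] at this
  refine this.congr' ?_
  filter_upwards [eventually_ge_atTop 1] with n hn
  rw [heq n hn]

/-- Strong law of large numbers for bounded martingale difference sequences. -/
lemma mds_slln {Ξ : Type*} {m0 : MeasurableSpace Ξ} (ℙ : Measure Ξ) [IsProbabilityMeasure ℙ]
    (𝒢 : Filtration ℕ m0) (Z : ℕ → Ξ → ℝ)
    (hmeas : ∀ t, StronglyMeasurable[𝒢 (t + 1)] (Z t))
    (hbdd : ∀ t, ∀ᵐ ξ ∂ℙ, |Z t ξ| ≤ 2)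
    (hmd : ∀ t, ℙ[Z t | 𝒢 t] =ᵐ[ℙ] 0) :
    ∀ᵐ ξ ∂ℙ, Tendsto (fun n : ℕ => (n : ℝ)⁻¹ * ∑ t ∈ Finset.range n, Z t ξ) atTop (nhds 0) := by
  have hZint : ∀ t, Integrable (Z t) ℙ := by
    intro t
    refine memLp_one_iff_integrable.mp (MemLp.of_bound
      (((hmeas t).mono (𝒢.le _)).aestronglyMeasurable) 2 ?_)
    filter_upwards [hbdd t] with ξ hξ using by simpa [Real.norm_eq_abs] using hξ
  set M : ℕ → Ξ → ℝ := fun n ξ => ∑ t ∈ Finset.range n, ((t : ℝ) + 1)⁻¹ * Z t ξ with hMdef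
  have hadp : ∀ n, StronglyMeasurable[𝒢 n] (M n) := by
    intro n
    apply Finset.stronglyMeasurable_fun_sum
    intro t ht
    exact ((hmeas t).mono (𝒢.mono (Finset.mem_range.mp ht))).const_mul _
  have hMint : ∀ n, Integrable (M n) ℙ := by
    intro n
    exact integrable_finset_sum _ fun t _ => (hZint t).const_mul _
  -- a.e. bound on `M n`
  have hMbdd : ∀ n, ∀ᵐ ξ ∂ℙ, ‖M n ξ‖ ≤ 2 * n := by
    intro n
    have : ∀ᵐ ξ ∂ℙ, ∀ t, |Z t ξ| ≤ 2 := ae_all_iff.mpr hbdd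
    filter_upwards [this] with ξ hξ
    calc ‖M n ξ‖ ≤ ∑ t ∈ Finset.range n, ‖((t : ℝ) + 1)⁻¹ * Z t ξ‖ := norm_sum_le _ _
      _ ≤ ∑ t ∈ Finset.range n, 2 := by
          refine Finset.sum_le_sum fun t _ => ?_
          rw [norm_mul, Real.norm_eq_abs, Real.norm_eq_abs]
          have h1 : |((t : ℝ) + 1)⁻¹| ≤ 1 := by
            rw [abs_of_nonneg (by positivity)]
            rw [inv_le_one_iff₀]; right; linarith [Nat.cast_nonneg (α := ℝ) t]
          calc |((t : ℝ) + 1)⁻¹| * |Z t ξ| ≤ 1 * 2 :=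
                mul_le_mul h1 (hξ t) (abs_nonneg _) zero_le_one
            _ = 2 := one_mul 2
      _ = 2 * n := by simp [mul_comm]
  -- martingale property
  have hmart : Martingale M 𝒢 ℙ := by
    refine martingale_nat hadp hMint fun n => ?_
    have hsucc : M (n + 1) = M n + ((n : ℝ) + 1)⁻¹ • Z n := by
      funext ξ
      simp [hMdef, Finset.sum_range_succ, smul_eq_mul]
    rw [hsucc]
    calc M n =ᵐ[ℙ] M n + ((n : ℝ) + 1)⁻¹ • (0 : Ξ → ℝ) := by simp
      _ =ᵐ[ℙ] M n + ((n : ℝ) + 1)⁻¹ • ℙ[Z n | 𝒢 n] := by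
          filter_upwards [hmd n] with ξ hξ
          simp [hξ]
      _ =ᵐ[ℙ] ℙ[M n | 𝒢 n] + ℙ[((n : ℝ) + 1)⁻¹ • Z n | 𝒢 n] := by
          refine EventuallyEq.add ?_ (condExp_smul _ _ _).symm
          rw [condExp_of_stronglyMeasurable (𝒢.le n) (hadp n) (hMint n)]
      _ =ᵐ[ℙ] ℙ[M n + ((n : ℝ) + 1)⁻¹ • Z n | 𝒢 n] :=
          (condExp_add (hMint n) ((hZint n).smul _) (𝒢 n)).symm
  -- orthogonality: ∫ M n * Z n = 0
  have horth : ∀ n, ∫ ξ, M n ξ * Z n ξ ∂ℙ = 0 := by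
    intro n
    have hpull : ℙ[M n * Z n | 𝒢 n] =ᵐ[ℙ] M n * ℙ[Z n | 𝒢 n] :=
      condExp_stronglyMeasurable_mul_of_bound (𝒢.le n) (hadp n) (hZint n) (2 * n) (hMbdd n)
    have hzero : ℙ[M n * Z n | 𝒢 n] =ᵐ[ℙ] 0 := by
      refine hpull.trans ?_
      filter_upwards [hmd n] with ξ hξ
      simp [hξ]
    have : ∫ ξ, (M n * Z n) ξ ∂ℙ = ∫ ξ, (ℙ[M n * Z n | 𝒢 n]) ξ ∂ℙ :=
      (integral_condExp (𝒢.le n)).symm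
    simpa using this.trans (integral_congr_ae hzero)
  -- integrability of products
  have hMZint : ∀ n, Integrable (fun ξ => M n ξ * Z n ξ) ℙ := fun n =>
    (hZint n).bdd_mul (((hadp n).mono (𝒢.le _)).aestronglyMeasurable) (hMbdd n)
  have hZsqint : ∀ n, Integrable (fun ξ => Z n ξ ^ 2) ℙ := by
    intro n
    have : Integrable (fun ξ => Z n ξ * Z n ξ) ℙ :=
      (hZint n).bdd_mul (((hmeas n).mono (𝒢.le _)).aestronglyMeasurable)
        (by filter_upwards [hbdd n] with ξ hξ using by simpa [Real.norm_eq_abs] using hξ)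
    simpa [sq] using this
  have hMsqint : ∀ n, Integrable (fun ξ => M n ξ ^ 2) ℙ := by
    intro n
    have : Integrable (fun ξ => M n ξ * M n ξ) ℙ :=
      (hMint n).bdd_mul (((hadp n).mono (𝒢.le _)).aestronglyMeasurable) (hMbdd n)
    simpa [sq] using this
  -- second moment bound
  have hVar : ∀ n, ∫ ξ, M n ξ ^ 2 ∂ℙ ≤ 4 * ∑ t ∈ Finset.range n, (((t : ℝ) + 1)⁻¹) ^ 2 := by
    intro n
    induction n with
    | zero => simp [hMdef]
    | succ n ih =>
      have hexp : ∀ ξ, M (n + 1) ξ ^ 2 =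
          M n ξ ^ 2 + 2 * ((n : ℝ) + 1)⁻¹ * (M n ξ * Z n ξ)
            + (((n : ℝ) + 1)⁻¹) ^ 2 * Z n ξ ^ 2 := by
        intro ξ
        simp only [hMdef, Finset.sum_range_succ]
        ring
      have hZsq : ∫ ξ, Z n ξ ^ 2 ∂ℙ ≤ 4 := by
        have hle : ∀ᵐ ξ ∂ℙ, Z n ξ ^ 2 ≤ 4 := by
          filter_upwards [hbdd n] with ξ hξ
          have h1 : -2 ≤ Z n ξ := neg_le_of_abs_le hξ
          have h2 : Z n ξ ≤ 2 := le_of_abs_le hξ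
          nlinarith
        calc ∫ ξ, Z n ξ ^ 2 ∂ℙ ≤ ∫ _, (4 : ℝ) ∂ℙ :=
              integral_mono_ae (hZsqint n) (integrable_const 4) hle
          _ = 4 := by simp
      calc ∫ ξ, M (n + 1) ξ ^ 2 ∂ℙ
          = ∫ ξ, (M n ξ ^ 2 + 2 * ((n : ℝ) + 1)⁻¹ * (M n ξ * Z n ξ)
              + (((n : ℝ) + 1)⁻¹) ^ 2 * Z n ξ ^ 2) ∂ℙ := by
            exact integral_congr_ae (Eventually.of_forall hexp)
        _ = ∫ ξ, M n ξ ^ 2 ∂ℙ + 2 * ((n : ℝ) + 1)⁻¹ * ∫ ξ, M n ξ * Z n ξ ∂ℙ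
              + (((n : ℝ) + 1)⁻¹) ^ 2 * ∫ ξ, Z n ξ ^ 2 ∂ℙ := by
            rw [integral_add (f := fun ξ => M n ξ ^ 2 + 2 * ((n : ℝ) + 1)⁻¹ * (M n ξ * Z n ξ))
              (g := fun ξ => (((n : ℝ) + 1)⁻¹) ^ 2 * Z n ξ ^ 2)
              ((hMsqint n).add ((hMZint n).const_mul _)) ((hZsqint n).const_mul _),
              integral_add (hMsqint n) ((hMZint n).const_mul _),
              integral_const_mul, integral_const_mul]
        _ = ∫ ξ, M n ξ ^ 2 ∂ℙ + (((n : ℝ) + 1)⁻¹) ^ 2 * ∫ ξ, Z n ξ ^ 2 ∂ℙ := by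
            rw [horth n]; ring
        _ ≤ 4 * ∑ t ∈ Finset.range n, (((t : ℝ) + 1)⁻¹) ^ 2
              + (((n : ℝ) + 1)⁻¹) ^ 2 * 4 := by
            have h1 : (0 : ℝ) ≤ (((n : ℝ) + 1)⁻¹) ^ 2 := by positivity
            gcongr
        _ = 4 * ∑ t ∈ Finset.range (n + 1), (((t : ℝ) + 1)⁻¹) ^ 2 := by
            rw [Finset.sum_range_succ]; ring
  -- the tail sum is bounded by 2
  have hsum : ∀ n, ∑ t ∈ Finset.range n, (((t : ℝ) + 1)⁻¹) ^ 2 ≤ 2 := by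
    intro n
    have hterm : ∀ t : ℕ, (((t : ℝ) + 1)⁻¹) ^ 2
        ≤ 2 * (((t : ℝ) + 1)⁻¹ - ((t : ℝ) + 1 + 1)⁻¹) := by
      intro t
      have h1 : (0 : ℝ) < (t : ℝ) + 1 := by positivity
      have h2 : (0 : ℝ) < (t : ℝ) + 2 := by positivity
      have key : ((t : ℝ) + 1)⁻¹ - ((t : ℝ) + 1 + 1)⁻¹
          = ((t : ℝ) + 1)⁻¹ * ((t : ℝ) + 2)⁻¹ := by
        rw [show ((t : ℝ) + 1 + 1) = ((t : ℝ) + 2) by ring,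
          inv_sub_inv (ne_of_gt h1) (ne_of_gt h2),
          show ((t : ℝ) + 2) - ((t : ℝ) + 1) = 1 by ring, one_div, mul_inv]
      rw [key, sq]
      have hle : ((t : ℝ) + 1)⁻¹ ≤ 2 * ((t : ℝ) + 2)⁻¹ := by
        rw [inv_eq_one_div, inv_eq_one_div, mul_one_div, div_le_div_iff₀ h1 h2]
        linarith
      calc ((t : ℝ) + 1)⁻¹ * ((t : ℝ) + 1)⁻¹
          ≤ ((t : ℝ) + 1)⁻¹ * (2 * ((t : ℝ) + 2)⁻¹) := by
            exact mul_le_mul_of_nonneg_left hle (by positivity)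
        _ = 2 * (((t : ℝ) + 1)⁻¹ * ((t : ℝ) + 2)⁻¹) := by ring
    calc ∑ t ∈ Finset.range n, (((t : ℝ) + 1)⁻¹) ^ 2
        ≤ ∑ t ∈ Finset.range n, 2 * (((t : ℝ) + 1)⁻¹ - ((t : ℝ) + 1 + 1)⁻¹) :=
          Finset.sum_le_sum fun t _ => hterm t
      _ = 2 * ∑ t ∈ Finset.range n,
            ((fun k : ℕ => ((k : ℝ) + 1)⁻¹) t - (fun k : ℕ => ((k : ℝ) + 1)⁻¹) (t + 1)) := by
          rw [Finset.mul_sum]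
          refine Finset.sum_congr rfl fun t _ => ?_
          push_cast
          ring_nf
      _ = 2 * (((0 : ℝ) + 1)⁻¹ - ((n : ℝ) + 1)⁻¹) := by
          rw [Finset.sum_range_sub' (f := fun k : ℕ => ((k : ℝ) + 1)⁻¹)]
          norm_num
      _ ≤ 2 := by
          have : (0 : ℝ) ≤ ((n : ℝ) + 1)⁻¹ := by positivity
          norm_num
          linarith
  -- uniform L¹ bound
  have hL1 : ∀ n, eLpNorm (M n) 1 ℙ ≤ ((5 : ℝ≥0) : ℝ≥0∞) := by
    intro n
    have habs : ∫ ξ, ‖M n ξ‖ ∂ℙ ≤ 5 := by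
      have hptwise : ∀ ξ, ‖M n ξ‖ ≤ (1 + M n ξ ^ 2) / 2 := by
        intro ξ
        rw [Real.norm_eq_abs]
        nlinarith [sq_nonneg (|M n ξ| - 1), sq_abs (M n ξ), abs_nonneg (M n ξ)]
      calc ∫ ξ, ‖M n ξ‖ ∂ℙ ≤ ∫ ξ, (1 + M n ξ ^ 2) / 2 ∂ℙ :=
            integral_mono_ae (hMint n).norm
              (((integrable_const 1).add (hMsqint n)).div_const 2)
              (Eventually.of_forall hptwise)
        _ = (1 + ∫ ξ, M n ξ ^ 2 ∂ℙ) / 2 := by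
            rw [integral_div, integral_add (integrable_const 1) (hMsqint n)]
            simp
        _ ≤ (1 + 4 * 2) / 2 := by
            have := (hVar n).trans (by linarith [hsum n] : 4 * ∑ t ∈ Finset.range n,
              (((t : ℝ) + 1)⁻¹) ^ 2 ≤ 4 * 2)
            linarith
        _ ≤ 5 := by norm_num
    rw [eLpNorm_one_eq_lintegral_enorm,
      ← ofReal_integral_norm_eq_lintegral_enorm (hMint n)]
    calc ENNReal.ofReal (∫ ξ, ‖M n ξ‖ ∂ℙ) ≤ ENNReal.ofReal 5 :=
          ENNReal.ofReal_le_ofReal habs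
      _ = ((5 : ℝ≥0) : ℝ≥0∞) := by
          rw [ENNReal.ofReal]
          norm_num
  -- martingale convergence + Kronecker
  filter_upwards [hmart.submartingale.exists_ae_tendsto_of_bdd hL1] with ξ hξ
  obtain ⟨c, hc⟩ := hξ
  exact kronecker_aux hc

variable {Ω : Type*} [Fintype Ω] [DecidableEq Ω]

/-- The Dirac point mass `δ_ω` as an element of the probability simplex in `ℝ^Ω`. -/
def diracVec (ω : Ω) : EuclideanSpace ℝ Ω := WithLp.toLp 2 (fun a => if a = ω then (1 : ℝ) else 0)

open Classical in
/-- Almost surely, for every forecast value `q ∈ F`, the averaged prediction errors vanish: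
`(1/T) Σ_{t<T} 1{f_t = q} (δ_{X_t} − p_t) → 0` as `T → ∞`. -/
theorem averaged_prediction_errors_vanish
    {Ξ : Type*} {m0 : MeasurableSpace Ξ} (ℙ : Measure Ξ) [IsProbabilityMeasure ℙ]
    (𝒢 : Filtration ℕ m0) (h0 : 𝒢 0 = ⊥)
    [MeasurableSpace Ω] [MeasurableSingletonClass Ω]
    (X : ℕ → Ξ → Ω) (hX : ∀ t, Measurable[𝒢 (t + 1)] (X t))
    (F : Finset (EuclideanSpace ℝ Ω))
    (f : ℕ → Ξ → EuclideanSpace ℝ Ω) (hfF : ∀ t ξ, f t ξ ∈ F)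
    (hf : ∀ t, Measurable[𝒢 t] (f t))
    (p : ℕ → Ξ → EuclideanSpace ℝ Ω)
    (hp : ∀ t a, (fun ξ => p t ξ a) =ᵐ[ℙ]
      ℙ[(fun ξ => if X t ξ = a then (1 : ℝ) else 0) | 𝒢 t]) :
    ∀ᵐ ξ ∂ℙ, ∀ q ∈ F,
      Tendsto (fun T : ℕ => (T : ℝ)⁻¹ •
          ∑ t ∈ Finset.range T, (if f t ξ = q then diracVec (X t ξ) - p t ξ else 0))
        atTop (nhds 0) := by
  classical
  -- notation
  set ind : ℕ → Ω → Ξ → ℝ := fun t a ξ => if X t ξ = a then (1 : ℝ) else 0 with hind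
  set ce : ℕ → Ω → Ξ → ℝ := fun t a => ℙ[ind t a | 𝒢 t] with hce
  set Z : Ω → EuclideanSpace ℝ Ω → ℕ → Ξ → ℝ :=
    fun a q t ξ => (if f t ξ = q then (1 : ℝ) else 0) * (ind t a ξ - ce t a ξ) with hZ
  have hindmeas : ∀ t a, Measurable[𝒢 (t + 1)] (ind t a) := by
    intro t a
    exact Measurable.ite (hX t (measurableSet_singleton a)) measurable_const measurable_const
  have hindint : ∀ t a, Integrable (ind t a) ℙ := by
    intro t a
    refine memLp_one_iff_integrable.mp (MemLp.of_bound
      (((hindmeas t a).mono (𝒢.le _) le_rfl).aestronglyMeasurable) 1 ?_)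
    refine Eventually.of_forall fun ξ => ?_
    simp only [hind, Real.norm_eq_abs]
    split <;> norm_num
  have hcebdd : ∀ t a, ∀ᵐ ξ ∂ℙ, 0 ≤ ce t a ξ ∧ ce t a ξ ≤ 1 := by
    intro t a
    have h1 : 0 ≤ᵐ[ℙ] ce t a :=
      condExp_nonneg (Eventually.of_forall fun ξ => by simp only [hind]; split <;> norm_num)
    have h2 : ce t a ≤ᵐ[ℙ] fun _ => (1 : ℝ) := by
      have := condExp_mono (μ := ℙ) (m := 𝒢 t) (hindint t a) (integrable_const (1 : ℝ))
        (Eventually.of_forall fun ξ => by simp only [hind]; split <;> norm_num)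
      refine this.trans ?_
      rw [condExp_const (𝒢.le t)]
    filter_upwards [h1, h2] with ξ ha hb using ⟨ha, hb⟩
  have hgmeas : ∀ t (q : EuclideanSpace ℝ Ω),
      StronglyMeasurable[𝒢 t] (fun ξ => if f t ξ = q then (1 : ℝ) else 0) := by
    intro t q
    have hset : MeasurableSet[𝒢 t] {ξ | f t ξ = q} := by
      have : {ξ | f t ξ = q} = ⋂ a : Ω, (fun ξ => f t ξ a) ⁻¹' {q a} := by
        ext ξ
        simp only [Set.mem_setOf_eq, Set.mem_iInter, Set.mem_preimage, Set.mem_singleton_iff]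
        constructor
        · intro h a; rw [h]
        · intro h; ext a; exact h a
      rw [this]
      exact MeasurableSet.iInter fun a =>
        ((measurable_pi_apply a).comp ((WithLp.measurable_ofLp _ _).comp (hf t))) (measurableSet_singleton (q a))
    exact (Measurable.ite hset measurable_const measurable_const).stronglyMeasurable
  -- key a.s. convergence for each coordinate and each forecast value
  have key : ∀ (a : Ω) (q : EuclideanSpace ℝ Ω), ∀ᵐ ξ ∂ℙ,
      Tendsto (fun n : ℕ => (n : ℝ)⁻¹ * ∑ t ∈ Finset.range n, Z a q t ξ) atTop (nhds 0) := by
    intro a q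
    refine mds_slln ℙ 𝒢 (Z a q) ?_ ?_ ?_
    · intro t
      refine StronglyMeasurable.mul ((hgmeas t q).mono (𝒢.mono t.le_succ)) ?_
      exact StronglyMeasurable.sub ((hindmeas t a).stronglyMeasurable)
        ((stronglyMeasurable_condExp (m := 𝒢 t)).mono (𝒢.mono t.le_succ))
    · intro t
      filter_upwards [hcebdd t a] with ξ ⟨h1, h2⟩
      simp only [hZ]
      have hindb : 0 ≤ ind t a ξ ∧ ind t a ξ ≤ 1 := by
        simp only [hind]; split <;> norm_num
      have : |ind t a ξ - ce t a ξ| ≤ 2 := by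
        rw [abs_le]; constructor <;> [linarith [hindb.1]; linarith [hindb.2]]
      calc |(if f t ξ = q then (1 : ℝ) else 0) * (ind t a ξ - ce t a ξ)|
          = |if f t ξ = q then (1 : ℝ) else 0| * |ind t a ξ - ce t a ξ| := abs_mul _ _
        _ ≤ 1 * 2 := by
            refine mul_le_mul ?_ this (abs_nonneg _) zero_le_one
            split <;> norm_num
        _ = 2 := one_mul 2
    · intro t
      have hdiff : Integrable (fun ξ => ind t a ξ - ce t a ξ) ℙ :=
        (hindint t a).sub integrable_condExp
      have hpull : ℙ[(fun ξ => if f t ξ = q then (1 : ℝ) else 0) *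
            (fun ξ => ind t a ξ - ce t a ξ) | 𝒢 t]
          =ᵐ[ℙ] (fun ξ => if f t ξ = q then (1 : ℝ) else 0) *
            ℙ[(fun ξ => ind t a ξ - ce t a ξ) | 𝒢 t] := by
        refine condExp_stronglyMeasurable_mul_of_bound (𝒢.le t) (hgmeas t q) hdiff 1 ?_
        refine Eventually.of_forall fun ξ => ?_
        rw [Real.norm_eq_abs]
        split <;> norm_num
      have hzero : ℙ[(fun ξ => ind t a ξ - ce t a ξ) | 𝒢 t] =ᵐ[ℙ] 0 := by
        have h1 : ℙ[(fun ξ => ind t a ξ - ce t a ξ) | 𝒢 t]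
            =ᵐ[ℙ] ℙ[ind t a | 𝒢 t] - ℙ[ce t a | 𝒢 t] :=
          condExp_sub (hindint t a) integrable_condExp (𝒢 t)
        have h2 : ℙ[ce t a | 𝒢 t] = ce t a :=
          condExp_of_stronglyMeasurable (𝒢.le t) stronglyMeasurable_condExp integrable_condExp
        refine h1.trans ?_
        rw [h2]
        refine Eventually.of_forall fun ξ => ?_
        simp [hce]
      calc ℙ[Z a q t | 𝒢 t]
          =ᵐ[ℙ] (fun ξ => if f t ξ = q then (1 : ℝ) else 0) *
            ℙ[(fun ξ => ind t a ξ - ce t a ξ) | 𝒢 t] := hpull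
        _ =ᵐ[ℙ] 0 := by
            filter_upwards [hzero] with ξ hξ
            simp only [Pi.mul_apply, hξ, Pi.zero_apply, mul_zero]
  -- combine a.e. statements
  have hkeyall : ∀ᵐ ξ ∂ℙ, ∀ (a : Ω), ∀ q ∈ F,
      Tendsto (fun n : ℕ => (n : ℝ)⁻¹ * ∑ t ∈ Finset.range n, Z a q t ξ) atTop (nhds 0) := by
    rw [ae_all_iff]
    intro a
    have := (ae_ball_iff (μ := ℙ) F.countable_toSet).mpr (fun q _ => key a q)
    filter_upwards [this] with ξ h q hq
    exact h q (Finset.mem_coe.mpr hq)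
  have hpall : ∀ᵐ ξ ∂ℙ, ∀ (t : ℕ) (a : Ω), p t ξ a = ce t a ξ := by
    rw [ae_all_iff]
    intro t
    rw [ae_all_iff]
    intro a
    exact hp t a
  filter_upwards [hkeyall, hpall] with ξ hkey hpξ
  intro q hq
  -- coordinatewise convergence
  have hcoord : ∀ a : Ω, Tendsto (fun T : ℕ => ((T : ℝ)⁻¹ •
      ∑ t ∈ Finset.range T, (if f t ξ = q then diracVec (X t ξ) - p t ξ else 0)) a)
      atTop (nhds 0) := by
    intro a
    have heq : ∀ T : ℕ, ((T : ℝ)⁻¹ •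
        ∑ t ∈ Finset.range T, (if f t ξ = q then diracVec (X t ξ) - p t ξ else 0)) a
        = (T : ℝ)⁻¹ * ∑ t ∈ Finset.range T, Z a q t ξ := by
      intro T
      have : ∀ t, (if f t ξ = q then diracVec (X t ξ) - p t ξ else (0 : EuclideanSpace ℝ Ω)) a
          = Z a q t ξ := by
        intro t
        simp only [hZ]
        by_cases h : f t ξ = q
        · simp only [h, if_true, one_mul]
          have h1 : (diracVec (X t ξ) - p t ξ) a = diracVec (X t ξ) a - p t ξ a := rfl
          rw [h1, hpξ t a]
          congr 1
          simp only [diracVec, hind]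
          by_cases hxa : X t ξ = a
          · simp [hxa]
          · simp [hxa, Ne.symm hxa]
        · simp [h]
      calc ((T : ℝ)⁻¹ • ∑ t ∈ Finset.range T,
            (if f t ξ = q then diracVec (X t ξ) - p t ξ else 0)) a
          = (T : ℝ)⁻¹ * (∑ t ∈ Finset.range T,
            (if f t ξ = q then diracVec (X t ξ) - p t ξ else 0)) a := rfl
        _ = (T : ℝ)⁻¹ * ∑ t ∈ Finset.range T,
            (if f t ξ = q then diracVec (X t ξ) - p t ξ else (0 : EuclideanSpace ℝ Ω)) a := by
            congr 1
            rw [WithLp.ofLp_sum]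
            exact Finset.sum_apply a _ _
        _ = (T : ℝ)⁻¹ * ∑ t ∈ Finset.range T, Z a q t ξ := by
            congr 1
            exact Finset.sum_congr rfl fun t _ => this t
    simp only [heq]
    exact hkey a q hq
  -- transfer coordinatewise convergence to EuclideanSpace
  have hpi : Tendsto (fun T : ℕ => fun a : Ω => ((T : ℝ)⁻¹ •
      ∑ t ∈ Finset.range T, (if f t ξ = q then diracVec (X t ξ) - p t ξ else 0)) a)
      atTop (nhds (0 : Ω → ℝ)) := by
    rw [tendsto_pi_nhds]
    intro a
    simpa using hcoord a
  have := ((EuclideanSpace.equiv Ω ℝ).symm.continuous.tendsto (0 : Ω → ℝ)).comp hpi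
  rw [map_zero] at this
  exact this

end
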